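/- Let (X,T) be a transitive topological dynamical system and n ≥ 2. If there exists an essential n-sensitive tuple (x₁,…,xₙ) which is a minimal point of the product system (Xⁿ, T⁽ⁿ⁾), then (X,T) is broken {ℕ}-n-sensitive, i.e., blockily thickly n-sensitive: there is δ > 0 such that for every L ∈ ℕ and opene U there exist z₁,…,zₙ ∈ U and k ∈ ℕ with min_{i<j} d(T^{k+l}zᵢ, T^{k+l}zⱼ) > δ for all l = 0,1,…,L. -/
import Mathlib


open Filter Topology MeasureTheory

variable {X : Type} [MetricSpace X]

def orbit (T : X → X) (x : X) : Set X := Set.range fun n : ℕ => T^[n] x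

def IsTransitiveSys (T : X → X) : Prop :=
  ∀ U V : Set X, IsOpen U → U.Nonempty → IsOpen V → V.Nonempty →
    {n : ℕ | (U ∩ T^[n] ⁻¹' V).Nonempty}.Infinite

def MinimalPoint (T : X → X) (x : X) : Prop :=
  ∀ y ∈ closure (orbit T x), x ∈ closure (orbit T y)

def MinimalSys (T : X → X) : Prop := ∀ x : X, Dense (orbit T x)

def IsMinimalSubset (T : X → X) (M : Set X) : Prop :=
  M.Nonempty ∧ IsClosed M ∧ Set.MapsTo T M M ∧
    ∀ M' ⊆ M, M'.Nonempty → IsClosed M' → Set.MapsTo T M' M' → M' = M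

noncomputable def ubd (F : Set ℕ) : ℝ :=
  Filter.limsup (fun N : ℕ => ⨆ m : ℕ, ((F ∩ Set.Ico m (m + N)).ncard : ℝ) / N) atTop

noncomputable def lbd (F : Set ℕ) : ℝ :=
  Filter.liminf (fun N : ℕ => ⨅ m : ℕ, ((F ∩ Set.Ico m (m + N)).ncard : ℝ) / N) atTop

def Syndetic (F : Set ℕ) : Prop := ∃ N : ℕ, ∀ k : ℕ, ∃ j ∈ F, k ≤ j ∧ j ≤ k + N

def Thick (F : Set ℕ) : Prop := ∀ l : ℕ, ∃ m : ℕ, Set.Icc m (m + l) ⊆ F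

def PiecewiseSyndetic (F : Set ℕ) : Prop := ∃ A B : Set ℕ, Thick A ∧ Syndetic B ∧ F = A ∩ B

def Fps : Set (Set ℕ) := {F | PiecewiseSyndetic F}
def Fpubd : Set (Set ℕ) := {F | 0 < ubd F}
def Finf : Set (Set ℕ) := {F | F.Infinite}

def FursFamily (S : Set (Set ℕ)) : Prop := ∀ F₁ F₂ : Set ℕ, F₁ ⊆ F₂ → F₁ ∈ S → F₂ ∈ S

def FamRecurrent {Z : Type} [MetricSpace Z] (S : Set (Set ℕ)) (T : Z → Z) (x : Z) : Prop :=
  ∀ U : Set Z, IsOpen U → x ∈ U → {n : ℕ | T^[n] x ∈ U} ∈ S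

def BrokenSensitive (T : X → X) (S : Set (Set ℕ)) (n : ℕ) : Prop :=
  ∃ δ > (0:ℝ), ∃ F₀ ∈ S, ∀ U : Set X, IsOpen U → U.Nonempty → ∀ l : ℕ,
    ∃ x : Fin n → X, (∀ i, x i ∈ U) ∧ ∃ m : ℕ,
      ∀ k ∈ F₀ ∩ Set.Icc 1 l, ∀ i j : Fin n, i ≠ j →
        δ < dist (T^[m + k] (x i)) (T^[m + k] (x j))

def SensitiveTuple (T : X → X) {n : ℕ} (x : Fin n → X) : Prop :=
  ∀ U : Set X, IsOpen U → U.Nonempty →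
    ∀ V : Fin n → Set X, (∀ i, IsOpen (V i) ∧ x i ∈ V i) →
      ∃ y : Fin n → X, (∀ i, y i ∈ U) ∧ ∃ m : ℕ, ∀ i, T^[m] (y i) ∈ V i

def EssentialSensitiveTuple (T : X → X) {n : ℕ} (x : Fin n → X) : Prop :=
  Function.Injective x ∧ SensitiveTuple T x

def prodMap (T : X → X) (n : ℕ) : (Fin n → X) → Fin n → X := fun x i => T (x i)

def BlockilyThickly (T : X → X) (n : ℕ) : Prop :=
  ∃ δ > (0:ℝ), ∀ k : ℕ, ∀ U : Set X, IsOpen U → U.Nonempty →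
    ∃ x : Fin n → X, (∀ i, x i ∈ U) ∧ ∃ m : ℕ, ∀ l ≤ k, ∀ i j : Fin n, i ≠ j →
      δ < dist (T^[m + l] (x i)) (T^[m + l] (x j))

def WeaklyMixing (T : X → X) : Prop :=
  IsTransitiveSys (fun p : X × X => (T p.1, T p.2))

def TopologicallyErgodic (T : X → X) : Prop :=
  ∀ U V : Set X, IsOpen U → U.Nonempty → IsOpen V → V.Nonempty →
    Syndetic {m : ℕ | (T^[m] ⁻¹' U ∩ V).Nonempty}

def MeanEquicontinuous (T : X → X) : Prop :=
  ∀ ε > (0:ℝ), ∃ δ > (0:ℝ), ∀ x y : X, dist x y < δ →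
    Filter.limsup (fun m : ℕ => (∑ k ∈ Finset.range m, dist (T^[k] x) (T^[k] y)) / m) atTop < ε

def BanachProximal (T : X → X) (x y : X) : Prop :=
  ∀ ε > (0:ℝ), ubd {m : ℕ | ε ≤ dist (T^[m] x) (T^[m] y)} = 0

def EquicontinuousSys (T : X → X) : Prop :=
  ∀ ε > (0:ℝ), ∃ δ > (0:ℝ), ∀ x y : X, dist x y < δ → ∀ n : ℕ, dist (T^[n] x) (T^[n] y) < ε

noncomputable def measSupp {Z : Type} [MetricSpace Z] [MeasurableSpace Z] (T : Z → Z) : Set Z :=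
  closure (⋃ μ ∈ {μ : Measure Z | IsProbabilityMeasure μ ∧
      ∀ s : Set Z, MeasurableSet s → μ (T ⁻¹' s) = μ s},
    {x : Z | ∀ U : Set Z, IsOpen U → x ∈ U → 0 < μ U})
lemma prodMap_iterate (T : X → X) (n m : ℕ) (x : Fin n → X) (i : Fin n) :
    (prodMap T n)^[m] x i = T^[m] (x i) := by
  induction m generalizing x with
  | zero => rfl
  | succ m ih =>
    rw [Function.iterate_succ_apply, Function.iterate_succ_apply]
    exact ih (prodMap T n x)

theorem stmt3 [CompactSpace X] (T : X → X) (hT : Continuous T) (hTs : Function.Surjective T)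
    (htr : IsTransitiveSys T) (n : ℕ) (hn : 2 ≤ n)
    (h : ∃ x : Fin n → X, EssentialSensitiveTuple T x ∧ MinimalPoint (prodMap T n) x) :
    BlockilyThickly T n := by
  obtain ⟨x, ⟨hinj, hsens⟩, hmin⟩ := h
  set P := prodMap T n with hP
  have hPc : Continuous P := continuous_pi fun i => hT.comp (continuous_apply i)
  set M : Set (Fin n → X) := closure (orbit P x) with hM
  have hxM : x ∈ M := subset_closure ⟨0, rfl⟩
  -- every point of M has pairwise distinct coordinates
  have hdist : ∀ z ∈ M, ∀ i j : Fin n, i ≠ j → z i ≠ z j := by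
    intro z hz i j hij heq
    apply hij
    apply hinj
    have hsub : closure (orbit P z) ⊆ {w : Fin n → X | w i = w j} := by
      apply closure_minimal
      · rintro w ⟨m, rfl⟩
        simp only [Set.mem_setOf_eq, hP, prodMap_iterate, heq]
      · exact isClosed_eq (continuous_apply i) (continuous_apply j)
    exact hsub (hmin z hz)
  -- M is compact nonempty
  have hMc : IsCompact M := isClosed_closure.isCompact
  -- the finset of off-diagonal pairs
  have hs : (Finset.univ.offDiag : Finset (Fin n × Fin n)).Nonempty := by
    refine ⟨(⟨0, by omega⟩, ⟨1, by omega⟩), Finset.mem_offDiag.mpr ⟨Finset.mem_univ _, Finset.mem_univ _, ?_⟩⟩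
    intro hcon
    have := congrArg Fin.val hcon
    simp at this
  set f : (Fin n → X) → ℝ := fun z =>
    (Finset.univ.offDiag : Finset (Fin n × Fin n)).inf' hs fun p => dist (z p.1) (z p.2) with hf
  have hfc : Continuous f := by
    apply Continuous.finset_inf'_apply
    intro p _
    exact Continuous.dist (continuous_apply p.1) (continuous_apply p.2)
  obtain ⟨z₀, hz₀M, hz₀min⟩ := hMc.exists_isMinOn ⟨x, hxM⟩ hfc.continuousOn
  set c : ℝ := f z₀ with hc
  have hcpos : 0 < c := by
    show (0:ℝ) < Finset.univ.offDiag.inf' hs fun p => dist (z₀ p.1) (z₀ p.2)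
    rw [Finset.lt_inf'_iff]
    intro p hp
    rw [Finset.mem_offDiag] at hp
    exact dist_pos.mpr (hdist z₀ hz₀M p.1 p.2 hp.2.2)
  have hcle : ∀ z ∈ M, ∀ i j : Fin n, i ≠ j → c ≤ dist (z i) (z j) := by
    intro z hz i j hij
    refine le_trans (hz₀min hz) ?_
    show (Finset.univ.offDiag.inf' hs fun p => dist (z p.1) (z p.2)) ≤ dist (z i) (z j)
    exact Finset.inf'_le (fun p : Fin n × Fin n => dist (z p.1) (z p.2))
      (show (i, j) ∈ Finset.univ.offDiag from
        Finset.mem_offDiag.mpr ⟨Finset.mem_univ _, Finset.mem_univ _, hij⟩)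
  refine ⟨c / 4, by linarith, ?_⟩
  intro k U hU hUne
  -- uniform continuity of z ↦ (T^[l] z)_{l ≤ k}
  have hG : Continuous (fun z : X => fun l : Fin (k + 1) => T^[(l : ℕ)] z) :=
    continuous_pi fun l => hT.iterate _
  have hGu : UniformContinuous (fun z : X => fun l : Fin (k + 1) => T^[(l : ℕ)] z) :=
    CompactSpace.uniformContinuous_of_continuous hG
  rw [Metric.uniformContinuous_iff] at hGu
  obtain ⟨η, hηpos, hη⟩ := hGu (c / 4) (by linarith)
  -- sensitivity with target balls of radius min η something
  obtain ⟨y, hyU, m, hym⟩ := hsens U hU hUne (fun i => Metric.ball (x i) η)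
    (fun i => ⟨Metric.isOpen_ball, Metric.mem_ball_self hηpos⟩)
  refine ⟨y, hyU, m, ?_⟩
  intro l hl i j hij
  -- T^[m+l] (y i) is within c/4 of T^[l] (x i)
  have key : ∀ i : Fin n, dist (T^[m + l] (y i)) (T^[l] (x i)) < c / 4 := by
    intro i
    have h1 : dist (T^[m] (y i)) (x i) < η := hym i
    have h2 := hη h1
    rw [dist_pi_lt_iff (by linarith)] at h2
    have h3 := h2 ⟨l, by omega⟩
    simpa [Function.iterate_add_apply, Nat.add_comm m l] using h3
  have hxl : P^[l] x ∈ M := subset_closure ⟨l, rfl⟩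
  have hcl : c ≤ dist (T^[l] (x i)) (T^[l] (x j)) := by
    have := hcle _ hxl i j hij
    simpa [hP, prodMap_iterate] using this
  have t1 := key i
  have t2 := key j
  have := dist_triangle4 (T^[l] (x i)) (T^[m + l] (y i)) (T^[m + l] (y j)) (T^[l] (x j))
  rw [dist_comm (T^[l] (x i)) (T^[m + l] (y i))] at this
  linarith
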